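/- There is no fixed inequality between aggregated fitness and relative fitness: there exist a place p and event logs L1, L2 such that f_agg^{L1}(p) < f_rel^{L1}(p) and f_agg^{L2}(p) > f_rel^{L2}(p). Concretely, for p=(a | b,c): with L1 = [⟨a,b⟩^90, ⟨x,y⟩^20, ⟨c⟩^10] we have f_agg = 0 < 9/10 = f_rel, and with L2 = [⟨a,b,a,c⟩^33, ⟨x⟩^1, ⟨b⟩^33, ⟨c⟩^33] we have f_agg = 1/2 > 1/3 = f_rel. -/

import Mathlib

open scoped Classical

variable {A : Type*} [DecidableEq A]

/-- Number of elements of list `l` that belong to `S`. -/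
def cnt (S : Finset A) (l : List A) : ℕ :=
  l.countP (fun a => decide (a ∈ S))

/-- A trace is underfed w.r.t. place `(I|O)` iff at some prefix more tokens are
consumed by `O` than have been produced by `I`. -/
def Underfed (I O : Finset A) (σ : List A) : Prop :=
  ∃ k, 1 ≤ k ∧ k ≤ σ.length ∧ cnt I (σ.take (k - 1)) < cnt O (σ.take k)

/-- A trace is overfed w.r.t. `(I|O)` iff more tokens are produced than consumed overall. -/
def Overfed (I O : Finset A) (σ : List A) : Prop :=
  cnt O σ < cnt I σ

/-- Fitting = neither underfed nor overfed. -/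
def Fitting (I O : Finset A) (σ : List A) : Prop :=
  ¬ Underfed I O σ ∧ ¬ Overfed I O σ

noncomputable def underfedL (L : Multiset (List A)) (I O : Finset A) : Multiset (List A) :=
  L.filter (Underfed I O)

noncomputable def overfedL (L : Multiset (List A)) (I O : Finset A) : Multiset (List A) :=
  L.filter (Overfed I O)

noncomputable def fittingL (L : Multiset (List A)) (I O : Finset A) : Multiset (List A) :=
  L.filter (Fitting I O)

/-- Traces of `L` activated by the activity set `S`. -/
noncomputable def actL (L : Multiset (List A)) (S : Finset A) : Multiset (List A) :=
  L.filter (fun σ => ∃ a ∈ S, a ∈ σ)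

/-- Absolute fitness. -/
noncomputable def fAbs (L : Multiset (List A)) (I O : Finset A) : ℝ :=
  ((fittingL L I O).card : ℝ) / (Multiset.card L : ℝ)

/-- Relative fitness. -/
noncomputable def fRel (L : Multiset (List A)) (I O : Finset A) : ℝ :=
  (((actL L (I ∪ O)) ∩ (fittingL L I O)).card : ℝ) / ((actL L (I ∪ O)).card : ℝ)

/-- Aggregated fitness. -/
noncomputable def fAgg (L : Multiset (List A)) (I O : Finset A) (h : (I ∪ O).Nonempty) : ℝ :=
  (I ∪ O).inf' h (fun a =>
    (((actL L {a}) ∩ (fittingL L I O)).card : ℝ) / ((actL L {a}).card : ℝ))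

/-- `p = (a | b,c)` with `a = 0, b = 1, c = 2, x = 3, y = 4`. -/
def I0 : Finset ℕ := {0}
def O0 : Finset ℕ := {1, 2}

noncomputable def Lone : Multiset (List ℕ) :=
  Multiset.replicate 90 [0, 1] + Multiset.replicate 20 [3, 4] + Multiset.replicate 10 [2]

noncomputable def Ltwo : Multiset (List ℕ) :=
  Multiset.replicate 33 [0, 1, 0, 2] + Multiset.replicate 1 [3] +
    Multiset.replicate 33 [1] + Multiset.replicate 33 [2]

lemma filt_rep {α : Type*} (p : α → Prop) [DecidablePred p] (n : ℕ) (l : α) :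
    Multiset.filter p (Multiset.replicate n l) =
      if p l then Multiset.replicate n l else 0 := by
  split
  · exact Multiset.filter_eq_self.2 (fun a ha => by rwa [Multiset.eq_of_mem_replicate ha])
  · exact Multiset.filter_eq_nil.2 (fun a ha h => by rw [Multiset.eq_of_mem_replicate ha] at h; contradiction)

lemma filt_inter {α : Type*} [DecidableEq α] (p q : α → Prop) [DecidablePred p] [DecidablePred q]
    (L : Multiset α) :
    Multiset.filter p L ∩ Multiset.filter q L = Multiset.filter (fun x => p x ∧ q x) L := by
  ext a
  simp [Multiset.count_inter, Multiset.count_filter]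
  split <;> split <;> simp_all

lemma notUnderfed (σ : List ℕ)
    (h : ∀ k, 1 ≤ k → k ≤ σ.length → cnt I0 (σ.take (k-1)) ≥ cnt O0 (σ.take k)) :
    ¬ Underfed I0 O0 σ := by
  rintro ⟨k, h1, h2, hlt⟩
  exact absurd hlt (not_lt.2 (h k h1 h2))

lemma fit01 : Fitting I0 O0 [0, 1] := by
  refine ⟨notUnderfed _ ?_, by unfold Overfed; decide⟩
  intro k h1 h2
  simp only [List.length_cons, List.length_nil] at h2
  interval_cases k <;> decide

lemma fit34 : Fitting I0 O0 [3, 4] := by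
  refine ⟨notUnderfed _ ?_, by unfold Overfed; decide⟩
  intro k h1 h2
  simp only [List.length_cons, List.length_nil] at h2
  interval_cases k <;> decide

lemma fit3 : Fitting I0 O0 [3] := by
  refine ⟨notUnderfed _ ?_, by unfold Overfed; decide⟩
  intro k h1 h2
  simp only [List.length_cons, List.length_nil] at h2
  interval_cases k <;> decide

lemma fit0102 : Fitting I0 O0 [0, 1, 0, 2] := by
  refine ⟨notUnderfed _ ?_, by unfold Overfed; decide⟩
  intro k h1 h2
  simp only [List.length_cons, List.length_nil] at h2
  interval_cases k <;> decide

lemma nfit2 : ¬ Fitting I0 O0 [2] := fun h => h.1 ⟨1, le_refl _, by simp, by unfold cnt; decide⟩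

lemma nfit1 : ¬ Fitting I0 O0 [1] := fun h => h.1 ⟨1, le_refl _, by simp, by unfold cnt; decide⟩

lemma cardL1 (p : List ℕ → Prop) [DecidablePred p] :
    Multiset.card (Multiset.filter p Lone) =
      (if p [0,1] then 90 else 0) + (if p [3,4] then 20 else 0) + (if p [2] then 10 else 0) := by
  simp only [Lone, Multiset.filter_add, filt_rep, apply_ite Multiset.card,
    Multiset.card_add, Multiset.card_replicate, Multiset.card_zero]

lemma cardL2 (p : List ℕ → Prop) [DecidablePred p] :
    Multiset.card (Multiset.filter p Ltwo) =
      (if p [0,1,0,2] then 33 else 0) + (if p [3] then 1 else 0) +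
        (if p [1] then 33 else 0) + (if p [2] then 33 else 0) := by
  simp only [Ltwo, Multiset.filter_add, filt_rep, apply_ite Multiset.card,
    Multiset.card_add, Multiset.card_replicate, Multiset.card_zero]

theorem no_fixed_inequality_agg_rel (h : (I0 ∪ O0).Nonempty) :
    fAgg Lone I0 O0 h = 0 ∧ fRel Lone I0 O0 = 9 / 10 ∧
    fAgg Ltwo I0 O0 h = 1 / 2 ∧ fRel Ltwo I0 O0 = 1 / 3 ∧
    fAgg Lone I0 O0 h < fRel Lone I0 O0 ∧
    fRel Ltwo I0 O0 < fAgg Ltwo I0 O0 h := by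
  have hIO : I0 ∪ O0 = ({0, 1, 2} : Finset ℕ) := by decide
  have m01 : ∃ a ∈ I0 ∪ O0, a ∈ ([0,1] : List ℕ) := ⟨0, by decide, by simp⟩
  have m34 : ¬ ∃ a ∈ I0 ∪ O0, a ∈ ([3,4] : List ℕ) := by decide
  have m2 : ∃ a ∈ I0 ∪ O0, a ∈ ([2] : List ℕ) := ⟨2, by decide, by simp⟩
  have m0102 : ∃ a ∈ I0 ∪ O0, a ∈ ([0,1,0,2] : List ℕ) := ⟨0, by decide, by simp⟩
  have m3 : ¬ ∃ a ∈ I0 ∪ O0, a ∈ ([3] : List ℕ) := by decide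
  have m1 : ∃ a ∈ I0 ∪ O0, a ∈ ([1] : List ℕ) := ⟨1, by decide, by simp⟩
  have rel1 : fRel Lone I0 O0 = 9 / 10 := by
    rw [fRel, fittingL, actL, filt_inter]
    rw [cardL1, cardL1]
    rw [if_pos ⟨m01, fit01⟩, if_neg (fun hc => m34 hc.1), if_neg (fun hc => nfit2 hc.2),
      if_pos m01, if_neg m34, if_pos m2]
    norm_num
  have rel2 : fRel Ltwo I0 O0 = 1 / 3 := by
    rw [fRel, fittingL, actL, filt_inter]
    rw [cardL2, cardL2]
    rw [if_pos ⟨m0102, fit0102⟩, if_neg (fun hc => m3 hc.1), if_neg (fun hc => nfit1 hc.2),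
      if_neg (fun hc => nfit2 hc.2), if_pos m0102, if_neg m3, if_pos m1, if_pos m2]
    norm_num
  have agg1 : fAgg Lone I0 O0 h = 0 := by
    rw [fAgg, Finset.inf'_congr (H := h) hIO (fun x _ => rfl)]
    simp only [actL, fittingL, filt_inter]
    rw [Finset.inf'_insert (H := Finset.insert_nonempty 1 {2}),
      Finset.inf'_insert (H := Finset.singleton_nonempty 2), Finset.inf'_singleton]
    simp only [cardL1]
    norm_num [fit01, fit34, nfit2, min_def]
  have agg2 : fAgg Ltwo I0 O0 h = 1 / 2 := by
    rw [fAgg, Finset.inf'_congr (H := h) hIO (fun x _ => rfl)]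
    simp only [actL, fittingL, filt_inter]
    rw [Finset.inf'_insert (H := Finset.insert_nonempty 1 {2}),
      Finset.inf'_insert (H := Finset.singleton_nonempty 2), Finset.inf'_singleton]
    simp only [cardL2]
    norm_num [fit0102, fit3, nfit1, nfit2, min_def]
  refine ⟨agg1, rel1, agg2, rel2, ?_, ?_⟩
  · rw [agg1, rel1]; norm_num
  · rw [agg2, rel2]; norm_num
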